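/- The expected SAA optimal value is monotone nondecreasing in the sample size: with z*_n = min_{x ∈ X} (1/n) Σ_{j=1}^n F(x, ξ_j) for i.i.d. samples, E[z*_{n+1}] ≥ E[z*_n]. -/

import Mathlib

open MeasureTheory ProbabilityTheory

private lemma integrable_finset_inf' {α ι : Type*} [MeasurableSpace α] {μ : Measure α}
    (s : Finset ι) (hs : s.Nonempty) (f : ι → α → ℝ)
    (hf : ∀ i ∈ s, Integrable (f i) μ) :
    Integrable (fun a => s.inf' hs fun i => f i a) μ := by
  revert hf
  induction hs using Finset.Nonempty.cons_induction with
  | singleton a => intro hf; simpa using hf a (by simp)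
  | cons a s h hs ih =>
    intro hf
    rw [show (fun a => (Finset.cons _ s h).inf' (Finset.cons_nonempty h) fun i => f i a) = (fun a => f _ a ⊓ s.inf' hs fun i => f i a) from funext fun a => Finset.inf'_cons hs (fun i => f i a)]
    exact (hf a (by simp)).inf (ih fun i hi => hf i (by simp [hi]))

private lemma integrable_iInf' {α X : Type*} [MeasurableSpace α] {μ : Measure α}
    [Fintype X] [Nonempty X] (f : X → α → ℝ) (hf : ∀ x, Integrable (f x) μ) :
    Integrable (fun a => ⨅ x, f x a) μ := by
  have h := integrable_finset_inf' Finset.univ Finset.univ_nonempty f (fun i _ => hf i)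
  simpa only [Finset.inf'_univ_eq_ciInf] using h

private lemma iIndepFun_comp_inj {Ω : Type*} [MeasurableSpace Ω] {P : Measure Ω}
    {Ω' : Type*} [m' : MeasurableSpace Ω'] {ξ : ℕ → Ω → Ω'}
    (hindep : iIndepFun ξ P)
    {k : ℕ} (g : Fin k → ℕ) (hg : Function.Injective g) :
    iIndepFun (fun i => ξ (g i)) P := by
  classical
  rw [iIndepFun_iff_measure_inter_preimage_eq_mul]
  intro S sets hsets
  set sets' : ℕ → Set Ω' :=
    Function.extend g (fun i => if i ∈ S then sets i else Set.univ) (fun _ => Set.univ)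
    with hsets'
  have key : ∀ i ∈ S, sets' (g i) = sets i := by
    intro i hi
    simp [hsets', hg.extend_apply, hi]
  have h1 : (⋂ i ∈ S, ξ (g i) ⁻¹' sets i) = ⋂ j ∈ S.image g, ξ j ⁻¹' sets' j := by
    rw [Finset.set_biInter_finset_image]
    exact Set.iInter₂_congr fun i hi => by rw [key i hi]
  have hsets'm : ∀ j, j ∈ S.image g → MeasurableSet (sets' j) := by
    intro j hj
    rcases Finset.mem_image.mp hj with ⟨i, hi, rfl⟩
    rw [key i hi]; exact hsets i hi
  rw [h1, hindep.measure_inter_preimage_eq_mul (S.image g) hsets'm,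
    Finset.prod_image (fun i _ j _ hij => hg hij)]
  exact Finset.prod_congr rfl fun i hi => by rw [key i hi]

private lemma map_pi_of_iid {Ω Ω' : Type*} [MeasurableSpace Ω] [m' : MeasurableSpace Ω']
    {P : Measure Ω} [IsProbabilityMeasure P] {μ : Measure Ω'} [IsProbabilityMeasure μ]
    {ξ : ℕ → Ω → Ω'}
    (hmeas : ∀ j, Measurable (ξ j)) (hdist : ∀ j, Measure.map (ξ j) P = μ)
    (hindep : iIndepFun ξ P)
    {k : ℕ} (g : Fin k → ℕ) (hg : Function.Injective g) :
    Measure.map (fun ω (i : Fin k) => ξ (g i) ω) P = Measure.pi (fun _ => μ) := by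
  have hind := iIndepFun_comp_inj hindep g hg
  have hT : Measurable (fun ω (i : Fin k) => ξ (g i) ω) :=
    measurable_pi_lambda _ (fun i => hmeas (g i))
  symm
  apply Measure.pi_eq
  intro s hs
  rw [Measure.map_apply hT (MeasurableSet.univ_pi hs)]
  have hpre : (fun ω (i : Fin k) => ξ (g i) ω) ⁻¹' Set.univ.pi s
      = ⋂ i ∈ Finset.univ, ξ (g i) ⁻¹' s i := by
    ext ω; simp [Set.mem_pi]
  rw [hpre, hind.measure_inter_preimage_eq_mul Finset.univ (fun i _ => hs i)]
  exact Finset.prod_congr rfl fun i _ => by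
    rw [← hdist (g i), Measure.map_apply (hmeas (g i)) (hs i)]

private lemma integral_saa_eq {Ω Ω' X : Type*} [MeasurableSpace Ω] [m' : MeasurableSpace Ω']
    {P : Measure Ω} [IsProbabilityMeasure P] {μ : Measure Ω'} [IsProbabilityMeasure μ]
    [Fintype X] [Nonempty X] {F : X → Ω' → ℝ} (hFm : ∀ x, Measurable (F x))
    {ξ : ℕ → Ω → Ω'} (hmeas : ∀ j, Measurable (ξ j)) (hdist : ∀ j, Measure.map (ξ j) P = μ)
    (hindep : iIndepFun ξ P)
    (c : ℝ) (s : Finset ℕ) :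
    ∫ ω, (⨅ x : X, c * ∑ j ∈ s, F x (ξ j ω)) ∂P
      = ∫ v : Fin s.card → Ω', (⨅ x : X, c * ∑ i, F x (v i)) ∂(Measure.pi fun _ => μ) := by
  classical
  set g : Fin s.card → ℕ := fun i => ((s.equivFin.symm i : s) : ℕ) with hgdef
  have hginj : Function.Injective g := fun a b hab =>
    s.equivFin.symm.injective (Subtype.ext hab)
  have hmap := map_pi_of_iid hmeas hdist hindep g hginj
  have hGm : Measurable (fun v : Fin s.card → Ω' => ⨅ x : X, c * ∑ i, F x (v i)) := by
    exact Measurable.iInf fun x => (measurable_const.mul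
      (Finset.measurable_sum _ fun i _ => (hFm x).comp (measurable_pi_apply i)))
  have hsum : ∀ (x : X) (ω : Ω), ∑ j ∈ s, F x (ξ j ω) = ∑ i : Fin s.card, F x (ξ (g i) ω) := by
    intro x ω
    rw [← Finset.sum_coe_sort s (fun j => F x (ξ j ω))]
    exact (Equiv.sum_comp s.equivFin.symm (fun j : s => F x (ξ (j : ℕ) ω))).symm
  rw [← hmap, integral_map (measurable_pi_lambda _ fun i => hmeas (g i)).aemeasurable
    hGm.aestronglyMeasurable]
  exact integral_congr_ae (Filter.Eventually.of_forall fun ω =>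
    congrArg _ (funext fun x => by rw [hsum x ω]))

private lemma saa_mono_aux {Ω : Type*} [MeasurableSpace Ω] (P : Measure Ω) [IsProbabilityMeasure P]
    {Ω' : Type*} [m' : MeasurableSpace Ω'] (μ : Measure Ω') [IsProbabilityMeasure μ]
    {X : Type*} [Fintype X] [Nonempty X]
    (F : X → Ω' → ℝ) (hFm : ∀ x, Measurable (F x)) (hF : ∀ x, Integrable (F x) μ)
    (ξ : ℕ → Ω → Ω') (hmeas : ∀ j, Measurable (ξ j))
    (hdist : ∀ j, Measure.map (ξ j) P = μ)
    (hindep : iIndepFun ξ P)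
    (n : ℕ) (hn : 0 < n) :
    (∫ ω, (⨅ x : X, (1 / (n : ℝ)) * ∑ j ∈ Finset.range n, F x (ξ j ω)) ∂P)
      ≤ ∫ ω, (⨅ x : X, (1 / ((n : ℝ) + 1)) * ∑ j ∈ Finset.range (n + 1), F x (ξ j ω)) ∂P := by
  classical
  -- integrability of the basic building blocks
  have hcomp : ∀ (x : X) (j : ℕ), Integrable (fun ω => F x (ξ j ω)) P := by
    intro x j
    have h := hF x
    rw [← hdist j] at h
    exact h.comp_measurable (hmeas j)
  have hMint : ∀ (c : ℝ) (t : Finset ℕ),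
      Integrable (fun ω => ⨅ x : X, c * ∑ j ∈ t, F x (ξ j ω)) P := by
    intro c t
    exact integrable_iInf' _ fun x =>
      (integrable_finset_sum t fun j _ => hcomp x j).const_mul c
  -- pointwise inequality
  have hpt : ∀ ω : Ω,
      (1 / ((n : ℝ) + 1)) * ∑ k ∈ Finset.range (n + 1),
          (⨅ x : X, (1 / (n : ℝ)) * ∑ j ∈ (Finset.range (n + 1)).erase k, F x (ξ j ω))
        ≤ ⨅ x : X, (1 / ((n : ℝ) + 1)) * ∑ j ∈ Finset.range (n + 1), F x (ξ j ω) := by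
    intro ω
    refine le_ciInf fun x => ?_
    have h1 : ∀ k ∈ Finset.range (n + 1),
        (⨅ x : X, (1 / (n : ℝ)) * ∑ j ∈ (Finset.range (n + 1)).erase k, F x (ξ j ω))
          ≤ (1 / (n : ℝ)) * ∑ j ∈ (Finset.range (n + 1)).erase k, F x (ξ j ω) :=
      fun k _ => ciInf_le (Set.Finite.bddBelow (Set.finite_range _)) x
    have h2 : ∑ k ∈ Finset.range (n + 1),
        (1 / (n : ℝ)) * ∑ j ∈ (Finset.range (n + 1)).erase k, F x (ξ j ω)
        = ∑ j ∈ Finset.range (n + 1), F x (ξ j ω) := by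
      rw [← Finset.mul_sum]
      have h3 : ∑ k ∈ Finset.range (n + 1), ∑ j ∈ (Finset.range (n + 1)).erase k, F x (ξ j ω)
          = (n : ℝ) * ∑ j ∈ Finset.range (n + 1), F x (ξ j ω) := by
        have h4 : ∀ k ∈ Finset.range (n + 1),
            ∑ j ∈ (Finset.range (n + 1)).erase k, F x (ξ j ω)
              = (∑ j ∈ Finset.range (n + 1), F x (ξ j ω)) - F x (ξ k ω) :=
          fun k hk => Finset.sum_erase_eq_sub hk
        rw [Finset.sum_congr rfl h4, Finset.sum_sub_distrib, Finset.sum_const,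
          Finset.card_range]
        simp [nsmul_eq_mul]
        ring
      rw [h3, ← mul_assoc]
      have hn' : (n : ℝ) ≠ 0 := Nat.cast_ne_zero.mpr hn.ne'
      field_simp
    calc (1 / ((n : ℝ) + 1)) * ∑ k ∈ Finset.range (n + 1),
          (⨅ x : X, (1 / (n : ℝ)) * ∑ j ∈ (Finset.range (n + 1)).erase k, F x (ξ j ω))
        ≤ (1 / ((n : ℝ) + 1)) * ∑ k ∈ Finset.range (n + 1),
          (1 / (n : ℝ)) * ∑ j ∈ (Finset.range (n + 1)).erase k, F x (ξ j ω) := by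
          apply mul_le_mul_of_nonneg_left (Finset.sum_le_sum h1)
          positivity
      _ = (1 / ((n : ℝ) + 1)) * ∑ j ∈ Finset.range (n + 1), F x (ξ j ω) := by rw [h2]
  -- integrate the pointwise inequality
  have hint1 : Integrable (fun ω => (1 / ((n : ℝ) + 1)) * ∑ k ∈ Finset.range (n + 1),
      (⨅ x : X, (1 / (n : ℝ)) * ∑ j ∈ (Finset.range (n + 1)).erase k, F x (ξ j ω))) P :=
    (integrable_finset_sum _ fun k _ => hMint (1 / (n : ℝ)) _).const_mul _
  have hstep := integral_mono hint1 (hMint (1 / ((n : ℝ) + 1)) (Finset.range (n + 1))) hpt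
  refine le_trans ?_ hstep
  -- compute the LHS integral
  rw [integral_const_mul, integral_finset_sum _
    (fun k _ => hMint (1 / (n : ℝ)) ((Finset.range (n + 1)).erase k))]
  have hval : ∀ k ∈ Finset.range (n + 1),
      (∫ ω, (⨅ x : X, (1 / (n : ℝ)) * ∑ j ∈ (Finset.range (n + 1)).erase k, F x (ξ j ω)) ∂P)
        = ∫ ω, (⨅ x : X, (1 / (n : ℝ)) * ∑ j ∈ Finset.range n, F x (ξ j ω)) ∂P := by
    intro k hk
    rw [integral_saa_eq hFm hmeas hdist hindep, integral_saa_eq hFm hmeas hdist hindep]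
    have hcard : ((Finset.range (n + 1)).erase k).card = (Finset.range n).card := by
      rw [Finset.card_erase_of_mem hk, Finset.card_range, Finset.card_range]
      omega
    rw [hcard]
  rw [Finset.sum_congr rfl hval, Finset.sum_const, Finset.card_range, nsmul_eq_mul]
  rw [← mul_assoc]
  push_cast
  rw [show (1 / ((n : ℝ) + 1)) * ((n : ℝ) + 1) = 1 by field_simp, one_mul]

/-- Monotonicity of the expected SAA optimal value in the sample size:
`E[z*_{n+1}] ≥ E[z*_n]`. -/
theorem saa_expected_value_monotone
    {Ω : Type*} [MeasureSpace Ω] (P : Measure Ω) [IsProbabilityMeasure P]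
    {Ω' : Type*} [MeasurableSpace Ω'] (μ : Measure Ω') [IsProbabilityMeasure μ]
    {X : Type*} [Fintype X] [Nonempty X]
    (F : X → Ω' → ℝ)
    (hF : ∀ x, Integrable (F x) μ)
    (ξ : ℕ → Ω → Ω')
    (hmeas : ∀ j, Measurable (ξ j))
    (hdist : ∀ j, Measure.map (ξ j) P = μ)
    (hindep : iIndepFun ξ P)
    (n : ℕ) (hn : 0 < n) :
    (∫ ω, (⨅ x : X, (1 / (n : ℝ)) * ∑ j ∈ Finset.range n, F x (ξ j ω)) ∂P)
      ≤ ∫ ω, (⨅ x : X, (1 / ((n : ℝ) + 1)) * ∑ j ∈ Finset.range (n + 1), F x (ξ j ω)) ∂P := by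
  classical
  set F' : X → Ω' → ℝ := fun x => ((hF x).aemeasurable).mk (F x) with hF'def
  have hF'm : ∀ x, Measurable (F' x) := fun x => ((hF x).aemeasurable).measurable_mk
  have hae : ∀ x, F x =ᵐ[μ] F' x := fun x => ((hF x).aemeasurable).ae_eq_mk
  have hF'i : ∀ x, Integrable (F' x) μ := fun x => (hF x).congr (hae x)
  have haeP : ∀ (x : X) (j : ℕ), (fun ω => F x (ξ j ω)) =ᵐ[P] fun ω => F' x (ξ j ω) := by
    intro x j
    have hqmp : Measure.QuasiMeasurePreserving (ξ j) P μ :=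
      (MeasurePreserving.quasiMeasurePreserving ⟨hmeas j, hdist j⟩)
    exact hqmp.ae_eq_comp (hae x)
  have hEq : ∀ (c : ℝ) (t : Finset ℕ),
      ∫ ω, (⨅ x : X, c * ∑ j ∈ t, F x (ξ j ω)) ∂P
        = ∫ ω, (⨅ x : X, c * ∑ j ∈ t, F' x (ξ j ω)) ∂P := by
    intro c t
    apply integral_congr_ae
    have hall : ∀ᵐ ω ∂P, ∀ (x : X) (j : ℕ), F x (ξ j ω) = F' x (ξ j ω) := by
      rw [ae_all_iff]
      intro x
      rw [ae_all_iff]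
      intro j
      exact haeP x j
    filter_upwards [hall] with ω hω
    exact congrArg _ (funext fun x => by
      rw [Finset.sum_congr rfl fun j _ => hω x j])
  rw [hEq, hEq]
  exact saa_mono_aux P μ F' hF'm hF'i ξ hmeas hdist hindep n hn
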